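/- arXiv:1807.02369 — 2 statements merged into one kernel-verified Lean document; each statement's English description precedes it below -/
import Mathlib

section
/- Let (W,S) be a Coxeter system, H ⊆ S, s,t ∈ S, and x ∈ ^{{s,t}}W. Suppose g ∈ W_{{s,t}} with g ≠ e, and p ∈ {s,t} is not a left descent of g, and suppose g·x ∈ W^H while p·g·x ∉ W^H. Then p·g is the longest element of W_{{s,t}}; in particular, W_{{s,t}} is finite. -/
open Polynomial

namespace CIKL

variable {B : Type*} {W : Type*} [Group W] {M : CoxeterMatrix B}

/-- The Bruhat order on a Coxeter group: the reflexive-transitive closure of the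
Bruhat graph, which has a directed edge from `a` to `b` whenever `b = a * t` for a
reflection `t` and `ℓ(a) < ℓ(b)`. -/
def bruhatLE (cs : CoxeterSystem M W) (u v : W) : Prop :=
  Relation.ReflTransGen
    (fun a b => ∃ t, cs.IsReflection t ∧ b = a * t ∧ cs.length a < cs.length b) u v

/-- Strict Bruhat order. -/
def bruhatLT (cs : CoxeterSystem M W) (u v : W) : Prop :=
  bruhatLE cs u v ∧ u ≠ v

/-- The cover relation `u ⊲ v` of the Bruhat order. -/
def bruhatCovBy (cs : CoxeterSystem M W) (u v : W) : Prop :=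
  bruhatLT cs u v ∧ ∀ z, bruhatLE cs u z → bruhatLE cs z v → z = u ∨ z = v

/-- `W^H`: minimal left coset representatives, `{w : ℓ(wh) > ℓ(w) for all h ∈ H}`. -/
def minRep (cs : CoxeterSystem M W) (H : Set B) : Set W :=
  {w | ∀ h ∈ H, cs.length w < cs.length (w * cs.simple h)}

/-- `^J W`: minimal right coset representatives, `{w : ℓ(rw) > ℓ(w) for all r ∈ J}`. -/
def minRepLeft (cs : CoxeterSystem M W) (J : Set B) : Set W :=
  {w | ∀ h ∈ J, cs.length w < cs.length (cs.simple h * w)}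

/-- The standard parabolic (dihedral) subgroup `W_{{s,t}}`. -/
def stSubgroup (cs : CoxeterSystem M W) (s t : B) : Subgroup W :=
  Subgroup.closure {cs.simple s, cs.simple t}

/-- The defining recurrence of the parabolic Kazhdan–Lusztig `R`-polynomials
`R^{H,x}_{u,v}` of Deodhar, for `x ∈ {-1, q}`. -/
def IsRFamily (cs : CoxeterSystem M W) (H : Set B) (x : Polynomial ℤ)
    (R : W → W → Polynomial ℤ) : Prop :=
  (∀ u v, u ∈ minRep cs H → v ∈ minRep cs H → ¬ bruhatLE cs u v → R u v = 0) ∧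
  (∀ u, u ∈ minRep cs H → R u u = 1) ∧
  (∀ u v, u ∈ minRep cs H → v ∈ minRep cs H → bruhatLT cs u v →
    ∀ i : B, cs.length (cs.simple i * v) < cs.length v →
      ((cs.length (cs.simple i * u) < cs.length u →
          R u v = R (cs.simple i * u) (cs.simple i * v)) ∧
       (cs.length u < cs.length (cs.simple i * u) → cs.simple i * u ∈ minRep cs H →
          R u v = (X - 1) * R u (cs.simple i * v)
            + X * R (cs.simple i * u) (cs.simple i * v)) ∧
       (cs.length u < cs.length (cs.simple i * u) → cs.simple i * u ∉ minRep cs H →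
          R u v = (X - 1 - x) * R u (cs.simple i * v))))

/-- The defining recurrence of the ordinary Kazhdan–Lusztig `R`-polynomials. -/
def IsOrdRFamily (cs : CoxeterSystem M W) (R : W → W → Polynomial ℤ) : Prop :=
  (∀ u v, ¬ bruhatLE cs u v → R u v = 0) ∧
  (∀ u, R u u = 1) ∧
  (∀ u v, bruhatLT cs u v →
    ∀ i : B, cs.length (cs.simple i * v) < cs.length v →
      ((cs.length (cs.simple i * u) < cs.length u →
          R u v = R (cs.simple i * u) (cs.simple i * v)) ∧
       (cs.length u < cs.length (cs.simple i * u) →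
          R u v = (X - 1) * R u (cs.simple i * v)
            + X * R (cs.simple i * u) (cs.simple i * v))))

/-- The defining properties of the parabolic Kazhdan–Lusztig polynomials
`P^{H,x}_{u,v}`, relative to a given family `R` of parabolic `R`-polynomials. -/
def IsPFamily (cs : CoxeterSystem M W) (H : Set B) (R P : W → W → Polynomial ℤ) : Prop :=
  (∀ u v, u ∈ minRep cs H → v ∈ minRep cs H → ¬ bruhatLE cs u v → P u v = 0) ∧
  (∀ u, u ∈ minRep cs H → P u u = 1) ∧
  (∀ u v, u ∈ minRep cs H → v ∈ minRep cs H → bruhatLT cs u v →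
    2 * (P u v).degree + 1 ≤ ((cs.length v - cs.length u : ℕ) : WithBot ℕ)) ∧
  (∀ u v, u ∈ minRep cs H → v ∈ minRep cs H →
    (P u v).reflect (cs.length v - cs.length u) =
      ∑ᶠ z ∈ {z | bruhatLE cs u z ∧ bruhatLE cs z v ∧ z ∈ minRep cs H},
        R u z * P z v)

/-- A special matching of `w`: an involution of the lower Bruhat interval `[e,w]`
which matches each element to an element covering it or covered by it, and such
that `u₁ ⊲ u₂` and `M u₁ ≠ u₂` imply `M u₁ ≤ M u₂`. -/
def IsSpecialMatching (cs : CoxeterSystem M W) (w : W) (Mm : W → W) : Prop :=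
  (∀ u, bruhatLE cs u w → bruhatLE cs (Mm u) w) ∧
  (∀ u, bruhatLE cs u w → Mm (Mm u) = u) ∧
  (∀ u, bruhatLE cs u w → bruhatCovBy cs u (Mm u) ∨ bruhatCovBy cs (Mm u) u) ∧
  (∀ u₁ u₂, bruhatLE cs u₁ w → bruhatLE cs u₂ w → bruhatCovBy cs u₁ u₂ →
    Mm u₁ ≠ u₂ → bruhatLE cs (Mm u₁) (Mm u₂))

/-- An `H`-special matching of `w`: a special matching `M` of `[e,w]` such that
`u ∈ [e,w]^H` and `M u ⊲ u` imply `M u ∈ W^H`. -/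
def IsHSpecialMatching (cs : CoxeterSystem M W) (H : Set B) (w : W) (Mm : W → W) : Prop :=
  IsSpecialMatching cs w Mm ∧
  (∀ u, bruhatLE cs u w → u ∈ minRep cs H → bruhatCovBy cs (Mm u) u →
    Mm u ∈ minRep cs H)

/-- The polynomials `R_i` of Lemma 2 (`ricorsioni`):
`R_i = (q-1) ∑_{k=0}^{i-1} (-1)^k q^k` for `i` odd and
`R_i = (q-1)² ∑_{k=0}^{(i-2)/2} q^{2k}` for `i` even. -/
noncomputable def seqR (i : ℕ) : Polynomial ℤ :=
  if Odd i then (X - 1) * ∑ k ∈ Finset.range i, (-1) ^ k * X ^ k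
  else (X - 1) ^ 2 * ∑ k ∈ Finset.range (i / 2), X ^ (2 * k)

open CoxeterSystem List

section InternalDevelopment

attribute [local instance] Classical.propDecidable


/-- The parity monoid: pairs `(f, w)` with `f : W → ZMod 2`, used to count
occurrences of reflections in inversion sequences. -/
@[ext]
structure PG (W : Type*) where
  par : W → ZMod 2
  elt : W

instance (W : Type*) [Group W] : Monoid (PG W) where
  mul x y := ⟨fun t => x.par t + y.par (x.elt⁻¹ * t * x.elt), x.elt * y.elt⟩
  one := ⟨0, 1⟩
  mul_assoc a b c := by
    refine PG.ext ?_ (mul_assoc ..)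
    funext u
    show (a.par u + b.par (a.elt⁻¹ * u * a.elt)) +
        c.par ((a.elt * b.elt)⁻¹ * u * (a.elt * b.elt)) =
      a.par u + (b.par (a.elt⁻¹ * u * a.elt) +
        c.par (b.elt⁻¹ * (a.elt⁻¹ * u * a.elt) * b.elt))
    rw [add_assoc]
    congr 2
    group
  one_mul x := by
    refine PG.ext ?_ (one_mul _)
    funext u
    show 0 + x.par (1⁻¹ * u * 1) = x.par u
    simp
  mul_one x := by
    refine PG.ext ?_ (mul_one _)
    funext u
    show x.par u + (0 : W → ZMod 2) _ = x.par u
    simp [Pi.zero_apply]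

@[simp] theorem PG.mul_par (x y : PG W) (t : W) :
    (x * y).par t = x.par t + y.par (x.elt⁻¹ * t * x.elt) := rfl

@[simp] theorem PG.mul_elt (x y : PG W) : (x * y).elt = x.elt * y.elt := rfl

@[simp] theorem PG.one_par (t : W) : (1 : PG W).par t = 0 := rfl

@[simp] theorem PG.one_elt : (1 : PG W).elt = 1 := rfl

theorem PG.pow_elt (x : PG W) (k : ℕ) : (x ^ k).elt = x.elt ^ k := by
  induction k with
  | zero => simp
  | succ k ih => rw [pow_succ, pow_succ, PG.mul_elt, ih]

theorem PG.pow_par (x : PG W) (k : ℕ) (t : W) :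
    (x ^ k).par t = ∑ j ∈ Finset.range k, x.par ((x.elt ^ j)⁻¹ * t * x.elt ^ j) := by
  induction k with
  | zero => simp
  | succ k ih =>
      rw [pow_succ, PG.mul_par, ih, Finset.sum_range_succ, PG.pow_elt]

private theorem sum_pair_eq (g : ℕ → ZMod 2) (m : ℕ) :
    ∑ j ∈ Finset.range m, (g (2 * j + 1) + g (2 * j + 2)) =
      ∑ k ∈ Finset.range (2 * m), g (k + 1) := by
  induction m with
  | zero => simp
  | succ m ih =>
      rw [Finset.sum_range_succ, ih, Nat.mul_succ, Finset.sum_range_succ,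
        Finset.sum_range_succ, add_assoc]

section DihedralIdentities

variable {G : Type*} [Group G] {a b : G}

private theorem conj_eq_iff (w c t : G) : w⁻¹ * t * w = c ↔ t = w * c * w⁻¹ := by
  constructor
  · intro h; rw [← h]; group
  · intro h; rw [h]; group

private theorem bu_pow (ha : a * a = 1) (hb : b * b = 1) (j : ℕ) :
    b * ((a * b) ^ j)⁻¹ = (a * b) ^ j * b := by
  have uinv : (a * b)⁻¹ = b * a := by
    rw [mul_inv_rev, inv_eq_of_mul_eq_one_right hb, inv_eq_of_mul_eq_one_right ha]
  have L1 : (a * b) * b = a := by rw [mul_assoc, hb, mul_one]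
  have L2 : b * (b * a) = a := by rw [← mul_assoc, hb, one_mul]
  induction j with
  | zero => simp
  | succ j ih =>
      calc b * ((a * b) ^ (j + 1))⁻¹
          = b * (((a * b) ^ j)⁻¹ * (a * b)⁻¹) := by rw [pow_succ', mul_inv_rev]
        _ = (b * ((a * b) ^ j)⁻¹) * (a * b)⁻¹ := (mul_assoc _ _ _).symm
        _ = ((a * b) ^ j * b) * (a * b)⁻¹ := by rw [ih]
        _ = (a * b) ^ j * (b * (b * a)) := by rw [uinv, mul_assoc]
        _ = (a * b) ^ j * a := by rw [L2]
        _ = (a * b) ^ j * ((a * b) * b) := by rw [L1]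
        _ = (a * b) ^ (j + 1) * b := by rw [← mul_assoc, ← pow_succ]

private theorem conj_pow1 (ha : a * a = 1) (hb : b * b = 1) (j : ℕ) :
    (a * b) ^ j * a * ((a * b) ^ j)⁻¹ = (a * b) ^ (2 * j + 1) * b := by
  have L1 : (a * b) * b = a := by rw [mul_assoc, hb, mul_one]
  calc (a * b) ^ j * a * ((a * b) ^ j)⁻¹
      = (a * b) ^ j * ((a * b) * b) * ((a * b) ^ j)⁻¹ := by rw [L1]
    _ = ((a * b) ^ j * (a * b)) * (b * ((a * b) ^ j)⁻¹) := by
        rw [← mul_assoc ((a * b) ^ j) (a * b) b, mul_assoc ((a * b) ^ j * (a * b)) b (((a * b) ^ j)⁻¹)]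
    _ = ((a * b) ^ j * (a * b)) * ((a * b) ^ j * b) := by rw [bu_pow ha hb]
    _ = ((a * b) ^ (j + 1) * (a * b) ^ j) * b := by rw [← pow_succ, mul_assoc]
    _ = (a * b) ^ (2 * j + 1) * b := by
        rw [← pow_add, show j + 1 + j = 2 * j + 1 by omega]

private theorem conj_pow2 (ha : a * a = 1) (hb : b * b = 1) (j : ℕ) :
    (a * b) ^ j * (a * b * a) * ((a * b) ^ j)⁻¹ = (a * b) ^ (2 * j + 2) * b := by
  have h2 : (a * b) * b = a := by rw [mul_assoc, hb, mul_one]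
  have haba : a * b * a = (a * b) ^ 2 * b := by
    have h1 : (a * b) ^ 2 * b = (a * b) * ((a * b) * b) := by
      rw [pow_two, mul_assoc]
    rw [h1, h2]
  calc (a * b) ^ j * (a * b * a) * ((a * b) ^ j)⁻¹
      = ((a * b) ^ j * (a * b) ^ 2) * (b * ((a * b) ^ j)⁻¹) := by
        rw [haba, ← mul_assoc ((a * b) ^ j) ((a * b) ^ 2) b,
          mul_assoc ((a * b) ^ j * (a * b) ^ 2) b]
    _ = ((a * b) ^ j * (a * b) ^ 2) * ((a * b) ^ j * b) := by rw [bu_pow ha hb]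
    _ = (((a * b) ^ (j + 2)) * (a * b) ^ j) * b := by rw [← pow_add, mul_assoc]
    _ = (a * b) ^ (2 * j + 2) * b := by
        rw [← pow_add, show j + 2 + j = 2 * j + 2 by omega]

private theorem pg_pair_pow {W : Type*} [Group W] (a b : W) (m : ℕ)
    (ha : a * a = 1) (hb : b * b = 1) (hum : (a * b) ^ m = 1) :
    ((⟨fun t => if t = a then 1 else 0, a⟩ : PG W) *
      (⟨fun t => if t = b then 1 else 0, b⟩ : PG W)) ^ m = 1 := by
  refine PG.ext ?_ ?_
  · funext t
    rw [PG.pow_par, PG.one_par]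
    have hsummand : ∀ j : ℕ,
        ((⟨fun t => if t = a then 1 else 0, a⟩ : PG W) *
          (⟨fun t => if t = b then 1 else 0, b⟩ : PG W)).par
          (((((⟨fun t => if t = a then 1 else 0, a⟩ : PG W) *
          (⟨fun t => if t = b then 1 else 0, b⟩ : PG W))).elt ^ j)⁻¹ * t *
          ((((⟨fun t => if t = a then 1 else 0, a⟩ : PG W) *
          (⟨fun t => if t = b then 1 else 0, b⟩ : PG W))).elt ^ j)) =
        (if t = (a * b) ^ (2 * j + 1) * b then (1 : ZMod 2) else 0) +
        (if t = (a * b) ^ (2 * j + 2) * b then 1 else 0) := by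
      intro j
      simp only [PG.mul_par, PG.mul_elt]
      congr 1
      · refine if_congr ?_ rfl rfl
        rw [conj_eq_iff, conj_pow1 ha hb j]
      · refine if_congr ?_ rfl rfl
        rw [conj_eq_iff a b, inv_eq_of_mul_eq_one_right ha, conj_eq_iff, conj_pow2 ha hb j]
    rw [Finset.sum_congr rfl fun j _ => hsummand j]
    rw [sum_pair_eq (fun k => if t = (a * b) ^ k * b then (1 : ZMod 2) else 0) m, two_mul,
      Finset.sum_range_add]
    have hper : ∀ k : ℕ, (if t = (a * b) ^ (m + (k + 1)) * b then (1 : ZMod 2) else 0) =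
        (if t = (a * b) ^ (k + 1) * b then (1 : ZMod 2) else 0) := by
      intro k
      refine if_congr ?_ rfl rfl
      rw [pow_add, hum, one_mul]
    calc (∑ k ∈ Finset.range m, (if t = (a * b) ^ (k + 1) * b then (1 : ZMod 2) else 0)) +
          ∑ k ∈ Finset.range m, (if t = (a * b) ^ (m + (k + 1)) * b then (1 : ZMod 2) else 0)
        = (∑ k ∈ Finset.range m, (if t = (a * b) ^ (k + 1) * b then (1 : ZMod 2) else 0)) +
          ∑ k ∈ Finset.range m, (if t = (a * b) ^ (k + 1) * b then (1 : ZMod 2) else 0) := by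
          rw [Finset.sum_congr rfl fun k _ => hper k]
      _ = 0 := CharTwo.add_self_eq_zero _
  · rw [PG.pow_elt, PG.mul_elt]
    show (a * b) ^ m = (1 : PG W).elt
    rw [PG.one_elt, hum]

end DihedralIdentities

variable (cs : CoxeterSystem M W)

local prefix:100 "s" => cs.simple
local prefix:100 "π" => cs.wordProd
local prefix:100 "ℓ" => cs.length
local prefix:100 "ris" => cs.rightInvSeq
local prefix:100 "lis" => cs.leftInvSeq

theorem pg_liftable : M.IsLiftable (fun i =>
    (⟨fun t => if t = cs.simple i then 1 else 0, cs.simple i⟩ : PG W)) :=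
  fun i i' => pg_pair_pow (cs.simple i) (cs.simple i') (M i i')
    (cs.simple_mul_simple_self i) (cs.simple_mul_simple_self i')
    (cs.simple_mul_simple_pow i i')

/-- The parity homomorphism. -/
noncomputable def pgHom : W →* PG W := cs.lift ⟨_, pg_liftable cs⟩

/-- `parN cs w t` is the mod-2 number of occurrences of `t` in the left inversion
sequence of any word for `w`. -/
noncomputable def parN (w t : W) : ZMod 2 := (pgHom cs w).par t

theorem pgHom_simple (i : B) :
    pgHom cs (cs.simple i) = ⟨fun t => if t = cs.simple i then 1 else 0, cs.simple i⟩ :=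
  cs.lift_apply_simple (pg_liftable cs) i

/-- The second component of `pgHom` is the identity. -/
theorem pgHom_snd (w : W) : (pgHom cs w).elt = w := by
  have : ((MonoidHom.mk ⟨fun x : PG W => x.elt, rfl⟩ (fun _ _ => rfl)).comp (pgHom cs)) =
      MonoidHom.id W := by
    apply cs.ext_simple
    intro i
    show (pgHom cs (cs.simple i)).elt = cs.simple i
    rw [pgHom_simple]
  exact DFunLike.congr_fun this w

theorem parN_mul (w₁ w₂ t : W) :
    parN cs (w₁ * w₂) t = parN cs w₁ t + parN cs w₂ (w₁⁻¹ * t * w₁) := by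
  unfold parN
  rw [map_mul, PG.mul_par, pgHom_snd]

theorem parN_simple (i : B) (t : W) :
    parN cs (cs.simple i) t = if t = cs.simple i then 1 else 0 := by
  unfold parN
  rw [pgHom_simple]

@[simp] theorem parN_one (t : W) : parN cs 1 t = 0 := by
  unfold parN
  rw [map_one, PG.one_par]

theorem parN_count (ω : List B) (t : W) :
    parN cs (π ω) t = ((lis ω).count t : ZMod 2) := by
  induction ω generalizing t with
  | nil => simp [leftInvSeq]
  | cons i ω ih =>
      rw [cs.wordProd_cons, parN_mul, parN_simple, ih, cs.inv_simple]
      show _ = (((s i :: List.map (MulAut.conj (s i)) (lis ω)).count t : ℕ) : ZMod 2)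
      have hx : (MulAut.conj (s i)) ((s i) * t * (s i)) = t := by
        rw [MulAut.conj_apply, cs.inv_simple]
        calc s i * (s i * t * s i) * s i = (s i * s i) * t * (s i * s i) := by group
          _ = t := by rw [cs.simple_mul_simple_self]; group
      have hc : List.count t (List.map (MulAut.conj (s i)) (lis ω)) =
          List.count ((s i) * t * (s i)) (lis ω) := by
        conv_lhs => rw [← hx]
        exact List.count_map_of_injective (lis ω) (MulAut.conj (s i))
          (MulAut.conj (s i)).injective _
      have hcount : List.count t (s i :: List.map (MulAut.conj (s i)) (lis ω)) =
          (if t = s i then 1 else 0) + List.count ((s i) * t * (s i)) (lis ω) := by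
        rw [List.count_cons, hc, add_comm]
        congr 1
        by_cases h : t = s i
        · subst h; simp
        · rw [if_neg h, if_neg]
          simp only [beq_iff_eq]
          exact fun hh => h hh.symm
      rw [hcount]
      push_cast
      rfl

theorem parN_isReflection_self {t : W} (ht : cs.IsReflection t) : parN cs t t = 1 := by
  obtain ⟨w, j, rfl⟩ := ht
  have e1 : (w * s j)⁻¹ * (w * s j * w⁻¹) * (w * s j) = s j := by group
  have e2 : w⁻¹ * (w * s j * w⁻¹) * w = s j := by group
  have h1 : parN cs (w * s j * w⁻¹) (w * s j * w⁻¹) =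
      parN cs w (w * s j * w⁻¹) + parN cs (s j) (s j) + parN cs w⁻¹ (s j) := by
    rw [parN_mul, parN_mul, e1, e2]
  have h0 : parN cs w (w * s j * w⁻¹) + parN cs w⁻¹ (s j) = 0 := by
    have h0' : parN cs (w * w⁻¹) (w * s j * w⁻¹) = 0 := by
      rw [mul_inv_cancel, parN_one]
    rw [parN_mul, e2] at h0'
    exact h0'
  rw [h1, parN_simple, if_pos rfl]
  calc parN cs w (w * s j * w⁻¹) + 1 + parN cs w⁻¹ (s j)
      = (parN cs w (w * s j * w⁻¹) + parN cs w⁻¹ (s j)) + 1 := by ring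
    _ = 1 := by rw [h0, zero_add]

/-- **Strong exchange**. -/
theorem strong_exchange {ω : List B} (hω : cs.IsReduced ω) {t : W}
    (ht : cs.IsLeftInversion (π ω) t) : t ∈ lis ω := by
  by_contra hmem
  have h0 : parN cs (π ω) t = 0 := by
    rw [parN_count, List.count_eq_zero_of_not_mem hmem]
    simp
  obtain ⟨ω', hred', hw'⟩ := cs.exists_reduced_word' (t * π ω)
  have htt : t * (t * π ω) = π ω := by
    rw [← mul_assoc, ht.1.mul_self, one_mul]
  have hmem' : t ∉ lis ω' := by
    intro hmem'
    have h2 := (cs.isLeftInversion_of_mem_leftInvSeq hred' hmem').2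
    rw [← hw', htt] at h2
    have h4 := ht.2
    omega
  have h0' : parN cs (t * π ω) t = 0 := by
    rw [hw', parN_count, List.count_eq_zero_of_not_mem hmem']
    simp
  have h1 : parN cs (π ω) t = 1 := by
    have hmul := parN_mul cs t (t * π ω) t
    rw [htt] at hmul
    have e : t⁻¹ * t * t = t := by rw [inv_mul_cancel, one_mul]
    rw [e] at hmul
    rw [hmul, parN_isReflection_self cs ht.1, h0', add_zero]
  rw [h0] at h1
  exact absurd h1 (by decide)

theorem exists_eraseIdx_of_isLeftInversion {ω : List B} (hω : cs.IsReduced ω) {t : W}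
    (ht : cs.IsLeftInversion (π ω) t) :
    ∃ j, j < ω.length ∧ t * π ω = π (ω.eraseIdx j) := by
  have hmem := strong_exchange cs hω ht
  obtain ⟨j, hj, hget⟩ := List.getElem_of_mem hmem
  rw [cs.length_leftInvSeq] at hj
  refine ⟨j, hj, ?_⟩
  have hgd : (lis ω).getD j 1 = t := by
    rw [List.getD_eq_getElem?_getD, List.getElem?_eq_getElem (by rwa [cs.length_leftInvSeq])]
    simpa using hget
  rw [← hgd, cs.getD_leftInvSeq_mul_wordProd]

theorem exists_eraseIdx_of_isRightInversion {ω : List B} (hω : cs.IsReduced ω) {t : W}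
    (ht : cs.IsRightInversion (π ω) t) :
    ∃ j, j < ω.length ∧ π ω * t = π (ω.eraseIdx j) := by
  have hrev : cs.IsReduced ω.reverse := (cs.isReduced_reverse_iff ω).mpr hω
  have hlinv : cs.IsLeftInversion (π ω.reverse) t := by
    rw [cs.wordProd_reverse]
    exact cs.isLeftInversion_inv_iff.mpr ht
  have hmem := strong_exchange cs hrev hlinv
  rw [cs.leftInvSeq_reverse] at hmem
  have hmem2 : t ∈ ris ω := List.mem_reverse.mp hmem
  obtain ⟨j, hj, hget⟩ := List.getElem_of_mem hmem2
  rw [cs.length_rightInvSeq] at hj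
  refine ⟨j, hj, ?_⟩
  have hgd : (ris ω).getD j 1 = t := by
    rw [List.getD_eq_getElem?_getD, List.getElem?_eq_getElem (by rwa [cs.length_rightInvSeq])]
    simpa using hget
  rw [← hgd, cs.wordProd_mul_getD_rightInvSeq]

theorem simple_mem_stSubgroup {i j : B} {r : B} (hr : r = i ∨ r = j) :
    cs.simple r ∈ stSubgroup cs i j := by
  apply Subgroup.subset_closure
  rcases hr with h | h <;> simp [h]

theorem exists_word_of_mem_stSubgroup {i j : B} {w : W} (hw : w ∈ stSubgroup cs i j) :
    ∃ ω : List B, (∀ r ∈ ω, r = i ∨ r = j) ∧ π ω = w := by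
  induction hw using Subgroup.closure_induction with
  | mem x hx =>
      rcases hx with hx | hx
      · exact ⟨[i], by simp, by simpa using hx.symm⟩
      · exact ⟨[j], by simp, by simpa using hx.symm⟩
  | one => exact ⟨[], by simp, by simp⟩
  | mul x y hx hy ihx ihy =>
      obtain ⟨ω₁, h₁, e₁⟩ := ihx
      obtain ⟨ω₂, h₂, e₂⟩ := ihy
      refine ⟨ω₁ ++ ω₂, ?_, by rw [cs.wordProd_append, e₁, e₂]⟩
      intro r hr
      rcases List.mem_append.mp hr with h | h
      · exact h₁ r h
      · exact h₂ r h
  | inv x hx ihx =>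
      obtain ⟨ω₁, h₁, e₁⟩ := ihx
      refine ⟨ω₁.reverse, ?_, by rw [cs.wordProd_reverse, e₁]⟩
      intro r hr
      exact h₁ r (List.mem_reverse.mp hr)

theorem exists_reduced_word_subset : ∀ n (ω : List B), ω.length = n →
    ∃ ω' : List B, (∀ r ∈ ω', r ∈ ω) ∧ cs.IsReduced ω' ∧ π ω' = π ω := by
  intro n
  induction n using Nat.strong_induction_on with
  | _ n IH =>
      intro ω hlen
      by_cases hred : cs.IsReduced ω
      · exact ⟨ω, fun r hr => hr, hred, rfl⟩
      have hω0 : ω ≠ [] := by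
        rintro rfl
        exact hred (by simp [CoxeterSystem.IsReduced])
      have hlen1 : 1 ≤ ω.length := by
        cases ω with
        | nil => exact absurd rfl hω0
        | cons a l => simp
      have hp : ¬ cs.IsReduced (ω.take ((ω.length - 1) + 1)) := by
        rw [Nat.sub_add_cancel hlen1, List.take_length]
        exact hred
      have hex : ∃ k, ¬ cs.IsReduced (ω.take (k + 1)) := ⟨ω.length - 1, hp⟩
      set jj := Nat.find hex with hjj
      have hj : ¬ cs.IsReduced (ω.take (jj + 1)) := Nat.find_spec hex
      have hmin : ∀ k, k < jj → cs.IsReduced (ω.take (k + 1)) := by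
        intro k hk
        by_contra hcon
        have hle : Nat.find hex ≤ k := Nat.find_le hcon
        omega
      have hjlt : jj < ω.length := by
        have hle : Nat.find hex ≤ ω.length - 1 := Nat.find_le hp
        omega
      have hredj : cs.IsReduced (ω.take jj) := by
        rcases Nat.eq_zero_or_pos jj with h0 | h0
        · rw [h0]; simp [CoxeterSystem.IsReduced]
        · have h1 := hmin (jj - 1) (by omega)
          rwa [Nat.sub_add_cancel h0] at h1
      have htake : ω.take (jj + 1) = ω.take jj ++ [ω.get ⟨jj, hjlt⟩] := by
        rw [List.take_succ]
        congr 1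
        rw [List.getElem?_eq_getElem hjlt]
        simp
      have hπtake : π (ω.take (jj + 1)) = π (ω.take jj) * s (ω.get ⟨jj, hjlt⟩) := by
        rw [htake, cs.wordProd_append]
        simp
      have hlentakej : (ω.take jj).length = jj := by
        rw [List.length_take]
        omega
      have hℓtakej : ℓ (π (ω.take jj)) = jj := by
        have h' := hredj
        rwa [CoxeterSystem.IsReduced, hlentakej] at h'
      have hone : cs.IsReduced (ω.take 1) := by
        cases ω with
        | nil => exact absurd rfl hω0
        | cons aa l =>
            show cs.IsReduced [aa]
            rw [CoxeterSystem.IsReduced]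
            simp [cs.length_simple]
      have hjge1 : 1 ≤ jj := by
        by_contra hcon
        have hj0 : jj = 0 := by omega
        rw [hj0] at hj
        exact hj hone
      have hnotred : ℓ (π (ω.take (jj + 1))) ≠ jj + 1 := by
        intro hcon
        apply hj
        rw [CoxeterSystem.IsReduced, hcon, List.length_take]
        omega
      have hdrop : ℓ (π (ω.take jj) * s (ω.get ⟨jj, hjlt⟩)) < ℓ (π (ω.take jj)) := by
        rcases cs.length_mul_simple (π (ω.take jj)) (ω.get ⟨jj, hjlt⟩) with h | h
        · exfalso
          apply hnotred
          rw [hπtake, h, hℓtakej]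
        · omega
      have hrinv : cs.IsRightInversion (π (ω.take jj)) (s (ω.get ⟨jj, hjlt⟩)) :=
        ⟨cs.isReflection_simple _, hdrop⟩
      obtain ⟨k, hk, heq⟩ := exists_eraseIdx_of_isRightInversion cs hredj hrinv
      rw [hlentakej] at hk
      have hklt : k < (ω.take jj).length := by rw [hlentakej]; omega
      have hπ'' : π ((ω.take jj).eraseIdx k ++ ω.drop (jj + 1)) = π ω := by
        rw [cs.wordProd_append, ← heq, ← hπtake, ← cs.wordProd_append,
          List.take_append_drop]
      have hlen'' : ((ω.take jj).eraseIdx k ++ ω.drop (jj + 1)).length < n := by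
        rw [List.length_append, List.length_drop]
        have h1 := List.length_eraseIdx_add_one hklt
        rw [hlentakej] at h1
        omega
      obtain ⟨ω', hsub', hred', hπ'⟩ := IH _ hlen'' ((ω.take jj).eraseIdx k ++ ω.drop (jj + 1)) rfl
      refine ⟨ω', ?_, hred', by rw [hπ', hπ'']⟩
      intro r hr
      rcases List.mem_append.mp (hsub' r hr) with h | h
      · exact List.take_subset jj ω (List.eraseIdx_subset h)
      · exact List.drop_subset _ ω h

theorem exists_reduced_st_word {i j : B} {w : W} (hw : w ∈ stSubgroup cs i j) :
    ∃ ω : List B, (∀ r ∈ ω, r = i ∨ r = j) ∧ cs.IsReduced ω ∧ π ω = w := by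
  obtain ⟨ω₀, hst, hπ⟩ := exists_word_of_mem_stSubgroup cs hw
  obtain ⟨ω, hsub, hred, hπ'⟩ := exists_reduced_word_subset cs ω₀.length ω₀ rfl
  exact ⟨ω, fun r hr => hst r (hsub r hr), hred, by rw [hπ', hπ]⟩

theorem exists_left_descent_st {i j : B} {w : W} (hw : w ∈ stSubgroup cs i j)
    (hne : w ≠ 1) :
    ∃ r : B, (r = i ∨ r = j) ∧ (cs.simple r * w ∈ stSubgroup cs i j) ∧
      ℓ (cs.simple r * w) + 1 = ℓ w := by
  obtain ⟨ω, hst, hred, hπ⟩ := exists_reduced_st_word cs hw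
  cases ω with
  | nil =>
      exfalso
      apply hne
      rw [← hπ]
      simp
  | cons r γ =>
      have hγred : cs.IsReduced γ := by
        have := CoxeterSystem.IsReduced.drop (ω := r :: γ) hred 1
        simpa using this
      have hsw : s r * w = π γ := by
        rw [← hπ, cs.wordProd_cons, ← mul_assoc, cs.simple_mul_simple_self, one_mul]
      refine ⟨r, hst r (by simp), ?_, ?_⟩
      · exact mul_mem (simple_mem_stSubgroup cs (hst r (by simp))) hw
      · rw [hsw, hγred, ← hπ]
        rw [hred]
        simp

theorem length_mul_of_min {i j : B} {x : W}
    (hmin : ∀ w ∈ stSubgroup cs i j, ℓ x ≤ ℓ (w * x)) :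
    ∀ w ∈ stSubgroup cs i j, ℓ (w * x) = ℓ w + ℓ x := by
  suffices H : ∀ n, ∀ w ∈ stSubgroup cs i j, ℓ w = n → ℓ (w * x) = n + ℓ x by
    intro w hw
    exact H (ℓ w) w hw rfl
  intro n
  induction n using Nat.strong_induction_on with
  | _ n IH =>
      intro w hw hn
      by_cases hw1 : w = 1
      · subst hw1
        rw [one_mul]
        rw [cs.length_one] at hn
        omega
      obtain ⟨r, hr, hmem', hlen'⟩ := exists_left_descent_st cs hw hw1
      set w' := cs.simple r * w with hw'def
      have hww' : w = cs.simple r * w' := by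
        rw [hw'def, ← mul_assoc, cs.simple_mul_simple_self, one_mul]
      have hIH : ℓ (w' * x) = (n - 1) + ℓ x := by
        apply IH (n - 1) (by omega) w' hmem'
        omega
      rcases cs.length_simple_mul (w' * x) r with h | h
      · rw [hww', mul_assoc, h, hIH]
        omega
      · exfalso
        obtain ⟨ω', hst', hred', hπ'⟩ := exists_reduced_st_word cs hmem'
        obtain ⟨ξ, hξlen, hξπ⟩ := cs.exists_reduced_word x
        have hξred : cs.IsReduced ξ := by
          exact hξlen
        have hπconc : π (ω' ++ ξ) = w' * x := by
          rw [cs.wordProd_append, hπ', ← hξπ]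
        have hconcred : cs.IsReduced (ω' ++ ξ) := by
          rw [CoxeterSystem.IsReduced, hπconc, List.length_append, hIH, ← hred', hπ', hξπ, hξlen]
          omega
        have hlinv : cs.IsLeftInversion (π (ω' ++ ξ)) (cs.simple r) := by
          refine ⟨cs.isReflection_simple r, ?_⟩
          rw [hπconc]
          omega
        obtain ⟨k, hk, heq⟩ := exists_eraseIdx_of_isLeftInversion cs hconcred hlinv
        rw [hπconc] at heq
        by_cases hkj : k < ω'.length
        · rw [List.eraseIdx_append_of_lt_length hkj] at heq
          have hweq : w = π (ω'.eraseIdx k) := by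
            have h2 : w * x = π (ω'.eraseIdx k) * x := by
              rw [hww', mul_assoc, heq, cs.wordProd_append, hξπ]
            exact mul_right_cancel h2
          have h3 : ℓ w ≤ (ω'.eraseIdx k).length := by
            rw [hweq]
            exact cs.length_wordProd_le _
          have h4 := List.length_eraseIdx_add_one hkj
          have h5 : ω'.length = n - 1 := by
            rw [← hred', hπ']
            omega
          omega
        · rw [List.eraseIdx_append_of_length_le (le_of_not_gt hkj)] at heq
          have h2 : (w'⁻¹ * w) * x = π (ξ.eraseIdx (k - ω'.length)) := by
            rw [cs.wordProd_append, hπ'] at heq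
            have h3 : (w'⁻¹ * w) * x = w'⁻¹ * (cs.simple r * (w' * x)) := by
              rw [hww']; group
            rw [h3, heq]
            group
          have hmem2 : w'⁻¹ * w ∈ stSubgroup cs i j := mul_mem (inv_mem hmem') hw
          have h3 := hmin _ hmem2
          rw [h2] at h3
          have h4 : ℓ (π (ξ.eraseIdx (k - ω'.length))) ≤ (ξ.eraseIdx (k - ω'.length)).length :=
            cs.length_wordProd_le _
          have hklt2 : k - ω'.length < ξ.length := by
            rw [List.length_append] at hk
            omega
          have h5 := List.length_eraseIdx_add_one hklt2
          have h6 : ℓ x = ξ.length := by rw [hξπ]; exact hξred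
          omega

theorem minRepLeft_length_mul {i j : B} {x : W} (hx : x ∈ minRepLeft cs {i, j}) :
    ∀ w ∈ stSubgroup cs i j, ℓ (w * x) = ℓ w + ℓ x := by
  have hex : ∃ n, ∃ w ∈ stSubgroup cs i j, ℓ (w * x) = n :=
    ⟨ℓ (1 * x), 1, one_mem _, rfl⟩
  obtain ⟨w₀, hw₀, hl₀⟩ := Nat.find_spec hex
  have hminx : ∀ w ∈ stSubgroup cs i j, ℓ (w₀ * x) ≤ ℓ (w * (w₀ * x)) := by
    intro w hw
    rw [← mul_assoc]
    rw [hl₀]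
    exact Nat.find_le ⟨w * w₀, mul_mem hw hw₀, rfl⟩
  have hxhat := length_mul_of_min cs hminx
  have hxeq : x = w₀⁻¹ * (w₀ * x) := by group
  have hw₀inv : w₀⁻¹ ∈ stSubgroup cs i j := inv_mem hw₀
  have hlx : ℓ x = ℓ w₀⁻¹ + ℓ (w₀ * x) := by
    conv_lhs => rw [hxeq]
    exact hxhat w₀⁻¹ hw₀inv
  by_cases h1 : w₀⁻¹ = 1
  · have h2 : w₀ = 1 := by rwa [inv_eq_one] at h1
    subst h2
    intro w hw
    have h5 := hxhat w hw
    simpa using h5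
  · exfalso
    obtain ⟨r, hr, hmem, hlen⟩ := exists_left_descent_st cs hw₀inv h1
    have h3 : ℓ (cs.simple r * x) = ℓ (cs.simple r * w₀⁻¹) + ℓ (w₀ * x) := by
      conv_lhs => rw [hxeq, ← mul_assoc]
      exact hxhat _ (mul_mem (simple_mem_stSubgroup cs hr) hw₀inv)
    have h4 : ℓ x < ℓ (cs.simple r * x) := by
      apply hx r
      rcases hr with h | h <;> simp [h]
    omega

theorem alt_cons {i j : B} (hij : i ≠ j) (k : ℕ) (c : B) (hc : c = i ∨ c = j)
    (hred : cs.IsReduced (c :: alternatingWord i j k)) :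
    c :: alternatingWord i j k = alternatingWord i j (k + 1) ∨
    c :: alternatingWord i j k = alternatingWord j i (k + 1) := by
  cases k with
  | zero =>
      rcases hc with rfl | rfl
      · right
        simp [alternatingWord]
      · left
        simp [alternatingWord]
  | succ k' =>
      have hsucc : alternatingWord i j (k' + 1) =
          (if Even k' then j else i) :: alternatingWord i j k' := alternatingWord_succ' i j k'
      have hsucc2 : alternatingWord i j (k' + 2) =
          (if Even (k' + 1) then j else i) :: alternatingWord i j (k' + 1) :=
        alternatingWord_succ' i j (k' + 1)
      have hcollapse : ∀ e : B, e = (if Even k' then j else i) →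
          ¬ cs.IsReduced (e :: alternatingWord i j (k' + 1)) := by
        intro e he hredc
        have hcol : π (e :: alternatingWord i j (k' + 1)) = π (alternatingWord i j k') := by
          rw [hsucc, ← he, cs.wordProd_cons, cs.wordProd_cons,
            cs.simple_mul_simple_cancel_left]
        have h2 : ℓ (π (alternatingWord i j k')) ≤ k' := by
          have h3 := cs.length_wordProd_le (alternatingWord i j k')
          rwa [length_alternatingWord] at h3
        rw [CoxeterSystem.IsReduced, hcol] at hredc
        rw [List.length_cons, length_alternatingWord] at hredc
        omega
      by_cases hpar : Even k'
      · rcases hc with rfl | rfl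
        · left
          rw [hsucc2, if_neg (by simp [Nat.even_add_one, hpar])]
        · exfalso
          exact hcollapse c (by rw [if_pos hpar]) hred
      · rcases hc with rfl | rfl
        · exfalso
          exact hcollapse c (by rw [if_neg hpar]) hred
        · left
          rw [hsucc2, if_pos (by simp [Nat.even_add_one, hpar])]

theorem st_reduced_word_alternating {i j : B} (hij : i ≠ j) :
    ∀ ω : List B, cs.IsReduced ω → (∀ r ∈ ω, r = i ∨ r = j) →
      ω = alternatingWord i j ω.length ∨ ω = alternatingWord j i ω.length := by
  intro ω
  induction ω with
  | nil => intro _ _; left; rfl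
  | cons c ω' ih =>
      intro hred hst
      have hred' : cs.IsReduced ω' := by
        have h0 := CoxeterSystem.IsReduced.drop (ω := c :: ω') hred (j := 1)
        simpa using h0
      have hst' : ∀ r ∈ ω', r = i ∨ r = j := fun r hr => hst r (by simp [hr])
      have hc := hst c (by simp)
      rcases ih hred' hst' with h | h
      · rw [h] at hred
        have hres := alt_cons cs hij ω'.length c hc hred
        rw [← h] at hres
        simpa using hres
      · rw [h] at hred
        have hres := alt_cons cs hij.symm ω'.length c (hc.symm) hred
        rw [← h] at hres
        simpa using hres.symm

theorem longest_element_aux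
    (H : Set B) (st tt : B) (x : W) (hx : x ∈ minRepLeft cs {st, tt})
    (g : W) (hg : g ∈ stSubgroup cs st tt) (hg1 : g ≠ 1)
    (p : B) (hp : p = st ∨ p = tt)
    (hpd : cs.length g < cs.length (cs.simple p * g))
    (hgx : g * x ∈ minRep cs H)
    (hpgx : cs.simple p * g * x ∉ minRep cs H) :
    (cs.simple p * g ∈ stSubgroup cs st tt ∧
      ∀ h ∈ stSubgroup cs st tt, cs.length h ≤ cs.length (cs.simple p * g)) ∧
    ((stSubgroup cs st tt : Set W)).Finite := by
  classical
  have hpg1 : ℓ (cs.simple p * g) = ℓ g + 1 := by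
    rcases cs.length_simple_mul g p with h | h
    · exact h
    · omega
  have hpgmem : cs.simple p * g ∈ stSubgroup cs st tt :=
    mul_mem (simple_mem_stSubgroup cs hp) hg
  have hlm := minRepLeft_length_mul cs hx
  have hgx_len : ℓ (g * x) = ℓ g + ℓ x := hlm g hg
  have hpgx_len : ℓ (cs.simple p * g * x) = ℓ g + 1 + ℓ x := by
    rw [hlm _ hpgmem, hpg1]
  -- extract a descent h ∈ H of p·g·x
  obtain ⟨hh, hH, hhlen⟩ : ∃ hh ∈ H,
      ℓ ((cs.simple p * g * x) * cs.simple hh) < ℓ (cs.simple p * g * x) := by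
    have hpgx' : ¬ ∀ hh ∈ H, ℓ (cs.simple p * g * x) < ℓ ((cs.simple p * g * x) * cs.simple hh) :=
      hpgx
    push_neg at hpgx'
    obtain ⟨hh, hH, hle⟩ := hpgx'
    refine ⟨hh, hH, ?_⟩
    rcases cs.length_mul_simple (cs.simple p * g * x) hh with h | h <;> omega
  -- lifting: p·(g·x) = (g·x)·h
  obtain ⟨ω, hωred, hωπ⟩ := cs.exists_reduced_word' (g * x)
  have hwordv : π (p :: ω) = cs.simple p * (g * x) := by
    rw [cs.wordProd_cons, ← hωπ]
  have hvred : cs.IsReduced (p :: ω) := by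
    rw [CoxeterSystem.IsReduced, hwordv, ← mul_assoc, hpgx_len, List.length_cons]
    have : ℓ (π ω) = ω.length := hωred
    rw [← hωπ, hgx_len] at this
    omega
  have hrinv : cs.IsRightInversion (π (p :: ω)) (cs.simple hh) := by
    refine ⟨cs.isReflection_simple hh, ?_⟩
    rw [hwordv, ← mul_assoc]
    exact hhlen
  obtain ⟨k, hk, heq⟩ := exists_eraseIdx_of_isRightInversion cs hvred hrinv
  rw [hwordv] at heq
  have hkey : cs.simple p * (g * x) = (g * x) * cs.simple hh := by
    cases k with
    | zero =>
        have h0 : (p :: ω).eraseIdx 0 = ω := rfl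
        rw [h0, ← hωπ] at heq
        have h2 : (cs.simple p * (g * x)) * cs.simple hh * cs.simple hh
            = (g * x) * cs.simple hh := by rw [heq]
        rwa [cs.simple_mul_simple_cancel_right] at h2
    | succ k' =>
        exfalso
        have h0 : (p :: ω).eraseIdx (k' + 1) = p :: ω.eraseIdx k' := rfl
        rw [h0, cs.wordProd_cons] at heq
        have h2 : (g * x) * cs.simple hh = π (ω.eraseIdx k') := by
          have h3 : cs.simple p * ((g * x) * cs.simple hh) =
              cs.simple p * π (ω.eraseIdx k') := by
            rw [← heq]; group
          exact mul_left_cancel h3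
        have h4 : ℓ ((g * x) * cs.simple hh) ≤ (ω.eraseIdx k').length := by
          rw [h2]; exact cs.length_wordProd_le _
        have h5 : k' < ω.length := by
          rw [List.length_cons] at hk; omega
        have h6 := List.length_eraseIdx_add_one h5
        have h7 : ℓ (π ω) = ω.length := hωred
        rw [← hωπ] at h7
        have h8 := hgx hh hH
        omega
  -- conclude g⁻¹·p·g is a simple reflection s q with q ∈ {st, tt}
  have hrinP : g⁻¹ * cs.simple p * g ∈ stSubgroup cs st tt :=
    mul_mem (mul_mem (inv_mem hg) (simple_mem_stSubgroup cs hp)) hg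
  have hrx : (g⁻¹ * cs.simple p * g) * x = x * cs.simple hh := by
    calc (g⁻¹ * cs.simple p * g) * x = g⁻¹ * (cs.simple p * (g * x)) := by group
      _ = g⁻¹ * ((g * x) * cs.simple hh) := by rw [hkey]
      _ = x * cs.simple hh := by group
  have hlr : ℓ (g⁻¹ * cs.simple p * g) = 1 := by
    have h1 : ℓ ((g⁻¹ * cs.simple p * g) * x) = ℓ (g⁻¹ * cs.simple p * g) + ℓ x :=
      hlm _ hrinP
    have h2 : ℓ (x * cs.simple hh) ≤ ℓ x + ℓ (cs.simple hh) := cs.length_mul_le x _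
    rw [cs.length_simple] at h2
    rw [hrx] at h1
    have h4 : g⁻¹ * cs.simple p * g ≠ 1 := by
      intro hcon
      have h5 : cs.simple p = 1 := by
        calc cs.simple p = g * (g⁻¹ * cs.simple p * g) * g⁻¹ := by group
          _ = g * 1 * g⁻¹ := by rw [hcon]
          _ = 1 := by group
      have h6 := cs.length_simple p
      rw [h5, cs.length_one] at h6
      omega
    have h5 : ℓ (g⁻¹ * cs.simple p * g) ≠ 0 := by
      intro hcon
      exact h4 (cs.length_eq_zero_iff.mp hcon)
    omega
  obtain ⟨τ, hτst, hτred, hτπ⟩ := exists_reduced_st_word cs hrinP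
  have hτlen : τ.length = 1 := by
    rw [← hτred, hτπ, hlr]
  obtain ⟨q, rfl⟩ : ∃ q, τ = [q] := by
    cases τ with
    | nil => simp at hτlen
    | cons q τ' =>
        refine ⟨q, ?_⟩
        rw [List.length_cons] at hτlen
        have : τ' = [] := List.length_eq_zero_iff.mp (by omega)
        rw [this]
  have hq : q = st ∨ q = tt := hτst q (by simp)
  have hgq : g⁻¹ * cs.simple p * g = cs.simple q := by
    rw [← hτπ]; simp
  have hkey2 : cs.simple p * g = g * cs.simple q := by
    calc cs.simple p * g = g * (g⁻¹ * cs.simple p * g) := by group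
      _ = g * cs.simple q := by rw [hgq]
  -- dihedral endgame
  obtain ⟨γ, hγst, hγred, hγπ⟩ := exists_reduced_st_word cs hg
  have hγne : γ ≠ [] := by
    rintro rfl
    apply hg1
    rw [← hγπ]
    simp
  obtain ⟨o, γ', rfl⟩ : ∃ o γ', γ = o :: γ' := by
    cases γ with
    | nil => exact absurd rfl hγne
    | cons o γ' => exact ⟨o, γ', rfl⟩
  have ho : o = st ∨ o = tt := hγst o (by simp)
  have hγlen : ℓ g = γ'.length + 1 := by
    rw [← hγπ, hγred, List.length_cons]
  have hso : cs.simple o * g = π γ' := by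
    rw [← hγπ, cs.wordProd_cons, ← mul_assoc, cs.simple_mul_simple_self, one_mul]
  have hog : ℓ (cs.simple o * g) < ℓ g := by
    rw [hso]
    have := cs.length_wordProd_le γ'
    omega
  have hsop : cs.simple o ≠ cs.simple p := by
    intro hcon
    rw [← hcon] at hpd
    omega
  have hop : o ≠ p := fun hcon => hsop (by rw [hcon])
  have hstne : st ≠ tt := by
    intro hcon
    apply hop
    have ho' : o = st := by
      rcases ho with h1 | h1
      · exact h1
      · rw [h1, hcon]
    have hp' : p = st := by
      rcases hp with h1 | h1
      · exact h1
      · rw [h1, hcon]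
    rw [ho', hp']
  -- the two reduced words for z = p·g
  have hw1π : π (p :: o :: γ') = cs.simple p * g := by
    rw [cs.wordProd_cons, hγπ]
  have hw1red : cs.IsReduced (p :: o :: γ') := by
    rw [CoxeterSystem.IsReduced, hw1π, hpg1]
    simp [hγlen]
  have hw2π : π ((o :: γ') ++ [q]) = cs.simple p * g := by
    rw [cs.wordProd_append, hγπ, cs.wordProd_singleton, ← hkey2]
  have hw2red : cs.IsReduced ((o :: γ') ++ [q]) := by
    rw [CoxeterSystem.IsReduced, hw2π, hpg1]
    simp [hγlen]
  have hlet1 : ∀ r ∈ p :: o :: γ', r = st ∨ r = tt := by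
    intro r hr
    rcases List.mem_cons.mp hr with h1 | h1
    · rw [h1]; exact hp
    · exact hγst r h1
  have hlet2 : ∀ r ∈ (o :: γ') ++ [q], r = st ∨ r = tt := by
    intro r hr
    rcases List.mem_append.mp hr with h1 | h1
    · exact hγst r h1
    · rw [List.mem_singleton.mp h1]; exact hq
  have hlen1 : (p :: o :: γ').length = ℓ g + 1 := by simp [hγlen]
  have hlen2 : ((o :: γ') ++ [q]).length = ℓ g + 1 := by simp [hγlen]
  have hD := st_reduced_word_alternating cs hstne
  -- products of both alternating words of length n equal z
  have hπboth : π (alternatingWord st tt (ℓ g + 1)) = cs.simple p * g ∧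
      π (alternatingWord tt st (ℓ g + 1)) = cs.simple p * g := by
    have hd1 := hD _ hw1red hlet1
    have hd2 := hD _ hw2red hlet2
    rw [hlen1] at hd1
    rw [hlen2] at hd2
    have hne12 : (p :: o :: γ') ≠ ((o :: γ') ++ [q]) := by
      intro hcon
      rw [List.cons_append] at hcon
      injection hcon with h1 h2
      exact hop h1.symm
    rcases hd1 with h1 | h1 <;> rcases hd2 with h2 | h2
    · exact absurd (h1.trans h2.symm) hne12
    · exact ⟨by rw [← h1, hw1π], by rw [← h2, hw2π]⟩
    · exact ⟨by rw [← h2, hw2π], by rw [← h1, hw1π]⟩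
    · exact absurd (h1.trans h2.symm) hne12
  -- every letter of {st, tt} is a left descent of z
  have hdesc : ∀ c : B, (c = st ∨ c = tt) →
      ℓ (cs.simple c * (cs.simple p * g)) < ℓ g + 1 := by
    intro c hc
    have hcase : c = p ∨ c = o := by
      rcases hc with hc1 | hc1 <;> rcases hp with hp1 | hp1 <;> rcases ho with ho1 | ho1 <;>
        first
          | exact Or.inl (hc1.trans hp1.symm)
          | exact Or.inr (hc1.trans ho1.symm)
          | exact absurd (ho1.trans hp1.symm) hop
    rcases hcase with rfl | rfl
    · rw [cs.simple_mul_simple_cancel_left]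
      omega
    · have hsoz : cs.simple c * (cs.simple p * g) = π (γ' ++ [q]) := by
        have hw2π' : π (c :: (γ' ++ [q])) = cs.simple p * g := by
          rw [← List.cons_append, hw2π]
        rw [cs.wordProd_cons] at hw2π'
        rw [← hw2π', ← mul_assoc, cs.simple_mul_simple_self, one_mul]
      rw [hsoz]
      have h1 := cs.length_wordProd_le (γ' ++ [q])
      rw [List.length_append, List.length_singleton] at h1
      omega
  have haltnotred : ∀ aa bb : B, π (alternatingWord aa bb (ℓ g + 1)) = cs.simple p * g →
      ((if Even (ℓ g + 1) then bb else aa) = st ∨ (if Even (ℓ g + 1) then bb else aa) = tt) →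
      ¬ cs.IsReduced (alternatingWord aa bb (ℓ g + 1 + 1)) := by
    intro aa bb hπ hc hredalt
    have h1 : π (alternatingWord aa bb (ℓ g + 1 + 1)) =
        cs.simple (if Even (ℓ g + 1) then bb else aa) * (cs.simple p * g) := by
      rw [alternatingWord_succ', cs.wordProd_cons, hπ]
    have h2 := hdesc _ hc
    rw [CoxeterSystem.IsReduced, h1, length_alternatingWord] at hredalt
    omega
  have hbound : ∀ w ∈ stSubgroup cs st tt, ℓ w ≤ ℓ g + 1 := by
    intro w hw
    by_contra hcon
    push_neg at hcon
    obtain ⟨ρ, hρst, hρred, hρπ⟩ := exists_reduced_st_word cs hw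
    have hρlen : ρ.length = ℓ w := by rw [← hρred, hρπ]
    have htred : cs.IsReduced (ρ.take (ℓ g + 1 + 1)) := CoxeterSystem.IsReduced.take hρred _
    have htlen : (ρ.take (ℓ g + 1 + 1)).length = ℓ g + 1 + 1 := by
      rw [List.length_take]
      omega
    have htst : ∀ r ∈ ρ.take (ℓ g + 1 + 1), r = st ∨ r = tt := fun r hr =>
      hρst r (List.take_subset _ _ hr)
    have hd := hD _ htred htst
    rw [htlen] at hd
    rcases hd with h1 | h1
    · apply haltnotred st tt hπboth.1 ?_ (h1 ▸ htred)
      by_cases hpar : Even (ℓ g + 1)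
      · rw [if_pos hpar]; right; rfl
      · rw [if_neg hpar]; left; rfl
    · apply haltnotred tt st hπboth.2 ?_ (h1 ▸ htred)
      by_cases hpar : Even (ℓ g + 1)
      · rw [if_pos hpar]; left; rfl
      · rw [if_neg hpar]; right; rfl
  have hfin : ((stSubgroup cs st tt : Set W)).Finite := by
    apply Set.Finite.subset
      (Set.Finite.union
        ((Set.finite_Iic (ℓ g + 1)).image (fun k => π (alternatingWord st tt k)))
        ((Set.finite_Iic (ℓ g + 1)).image (fun k => π (alternatingWord tt st k))))
    intro w hw
    obtain ⟨ρ, hρst, hρred, hρπ⟩ := exists_reduced_st_word cs hw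
    have hρlen : ρ.length ≤ ℓ g + 1 := by
      rw [← hρred, hρπ]
      exact hbound w hw
    rcases hD _ hρred hρst with h1 | h1
    · left
      exact ⟨ρ.length, hρlen, by
        show π (alternatingWord st tt ρ.length) = w
        rw [← h1, hρπ]⟩
    · right
      exact ⟨ρ.length, hρlen, by
        show π (alternatingWord tt st ρ.length) = w
        rw [← h1, hρπ]⟩
  refine ⟨⟨hpgmem, ?_⟩, hfin⟩
  intro h hh
  rw [hpg1]
  exact hbound h hh

end InternalDevelopment

/-- if `x ∈ ^{{s,t}}W`, `g ∈ W_{{s,t}} \ {e}`, `p ∈ {s,t}` is not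
a left descent of `g`, `g·x ∈ W^H` and `p·g·x ∉ W^H`, then `p·g` is the longest
element of `W_{{s,t}}`; in particular `W_{{s,t}}` is finite. -/
theorem longest_element_of_not_minRep
    {B : Type*} {W : Type*} [Group W] {M : CoxeterMatrix B} (cs : CoxeterSystem M W)
    (H : Set B) (s t : B) (x : W) (hx : x ∈ minRepLeft cs {s, t})
    (g : W) (hg : g ∈ stSubgroup cs s t) (hg1 : g ≠ 1)
    (p : B) (hp : p = s ∨ p = t)
    (hpd : cs.length g < cs.length (cs.simple p * g))
    (hgx : g * x ∈ minRep cs H)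
    (hpgx : cs.simple p * g * x ∉ minRep cs H) :
    (cs.simple p * g ∈ stSubgroup cs s t ∧
      ∀ h ∈ stSubgroup cs s t, cs.length h ≤ cs.length (cs.simple p * g)) ∧
    (stSubgroup cs s t : Set W).Finite := by
  exact longest_element_aux cs H s t x hx g hg hg1 p hp hpd hgx hpgx


end CIKL
end

section
/- Let (W,S) be a Coxeter system, H ⊆ S, x ∈ {−1,q}, and s,t ∈ S. Let w = w₂·w₃ ∈ W^H and u = u₂·u₃ ∈ W^H with u ≤ w, w₂,u₂ ∈ W_{{s,t}}, w₃,u₃ ∈ ^{{s,t}}W (length-additive factorizations). If (W_{{s,t}}·u₃) ∩ W^H = {u₃}, then u = u₃ and R^{H,x}_{u,w}(q) = (q−1−x)^{ℓ(w₂)} · R^{H,x}_{u₃,w₃}(q). -/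
open Polynomial
open scoped Classical

namespace CIKL

variable {B : Type*} {W : Type*} [Group W] {M : CoxeterMatrix B}

section Eta
variable (cs : CoxeterSystem M W)
local prefix:100 "σ" => cs.simple

lemma conj_simple_eq_simple_iff (i : B) (w : W) :
    σ i * w * σ i = σ i ↔ w = σ i := by
  constructor
  · intro h
    have h2 := congrArg (fun z => σ i * z * σ i) h
    simpa [mul_assoc, cs.simple_mul_simple_cancel_left, cs.simple_mul_simple_self] using h2
  · rintro rfl
    simp [mul_assoc, cs.simple_mul_simple_self]

/-- The function underlying the permutation representation on `W × ℤˣ`. -/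
noncomputable def etaFun (i : B) : W × ℤˣ → W × ℤˣ :=
  fun p => (σ i * p.1 * σ i, if p.1 = σ i then -p.2 else p.2)

lemma etaFun_involutive (i : B) : Function.Involutive (etaFun cs i) := by
  intro p
  unfold etaFun
  have hconj : σ i * (σ i * p.1 * σ i) * σ i = p.1 := by
    group
    simp [cs.simple_sq]
  by_cases h : p.1 = σ i
  · have h1 : σ i * p.1 * σ i = σ i := (conj_simple_eq_simple_iff cs i p.1).mpr h
    rw [h1, h, if_pos rfl, if_pos rfl, neg_neg]
    have h3 : σ i * (σ i, -p.2).1 * σ i = p.1 := by rw [h]; simpa using h ▸ h1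
    exact Prod.ext h3 rfl
  · have h2 : ¬ (σ i * p.1 * σ i = σ i) := fun hc => h ((conj_simple_eq_simple_iff cs i p.1).mp hc)
    simp [h, h2, hconj]

/-- The permutation representation generator. -/
noncomputable def eta (i : B) : Equiv.Perm (W × ℤˣ) := (etaFun_involutive cs i).toPerm

lemma eta_apply (i : B) (p : W × ℤˣ) :
    eta cs i p = (σ i * p.1 * σ i, if p.1 = σ i then -p.2 else p.2) := rfl

lemma simple_conj_pow (i j : B) (n : ℕ) :
    σ j * (σ i * σ j) ^ n * σ j = ((σ i * σ j) ^ n)⁻¹ := by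
  have h1 : σ j * (σ i * σ j) * (σ j)⁻¹ = (σ i * σ j)⁻¹ := by
    rw [mul_inv_rev, cs.inv_simple, cs.inv_simple]
    rw [mul_assoc, mul_assoc, cs.simple_mul_simple_self, mul_one]
  calc σ j * (σ i * σ j) ^ n * σ j = σ j * (σ i * σ j) ^ n * (σ j)⁻¹ := by rw [cs.inv_simple]
    _ = (σ j * (σ i * σ j) * (σ j)⁻¹) ^ n := by rw [conj_pow]
    _ = ((σ i * σ j)⁻¹) ^ n := by rw [h1]
    _ = ((σ i * σ j) ^ n)⁻¹ := by rw [inv_pow]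

lemma simple_comm_pow (i j : B) (n : ℕ) :
    σ j * (σ i * σ j) ^ n = ((σ i * σ j) ^ n)⁻¹ * σ j := by
  have h := simple_conj_pow cs i j n
  calc σ j * (σ i * σ j) ^ n = (σ j * (σ i * σ j) ^ n * σ j) * σ j := by
        rw [mul_assoc ((σ j * (σ i * σ j) ^ n)) _ _, cs.simple_mul_simple_self, mul_one]
    _ = ((σ i * σ j) ^ n)⁻¹ * σ j := by rw [h]

lemma cond1_iff (i j : B) (n : ℕ) (w : W) :
    (σ i * σ j) ^ n * w * ((σ i * σ j) ^ n)⁻¹ = σ j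
      ↔ (σ i * σ j) ^ (2 * n) = σ j * w⁻¹ := by
  have hqq : (σ i * σ j) ^ (2 * n) = (σ i * σ j) ^ n * (σ i * σ j) ^ n := by
    rw [← pow_add, two_mul]
  have hcm : σ j * (σ i * σ j) ^ n = ((σ i * σ j) ^ n)⁻¹ * σ j := simple_comm_pow cs i j n
  set q := (σ i * σ j) ^ n with hq
  clear_value q
  have Hz1 : ∀ z : W, σ j * (q * z) = q⁻¹ * (σ j * z) := fun z => by
    rw [← mul_assoc, hcm, mul_assoc]
  have hcm' : σ j * q⁻¹ = q * σ j := by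
    have h2 := congrArg (fun z => q * z * q⁻¹) hcm
    simp only [mul_assoc, inv_mul_cancel_left, mul_inv_cancel_left, mul_inv_cancel,
      mul_one] at h2
    exact h2.symm
  have Hz2 : ∀ z : W, σ j * (q⁻¹ * z) = q * (σ j * z) := fun z => by
    rw [← mul_assoc, hcm', mul_assoc]
  rw [hqq]
  constructor
  · intro h
    have hw := congrArg (fun z => q⁻¹ * z * q) h
    simp only [mul_assoc, inv_mul_cancel_left, mul_inv_cancel_left, inv_mul_cancel,
      mul_one] at hw
    rw [hw]
    simp only [mul_inv_rev, cs.inv_simple, inv_inv, mul_assoc, Hz1, Hz2,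
      cs.simple_mul_simple_cancel_left, inv_mul_cancel_left, mul_inv_cancel_left]
  · intro h
    have hw := congrArg (fun z => (σ j * z)⁻¹) h
    simp only [mul_inv_rev, cs.inv_simple, inv_inv, mul_assoc,
      cs.simple_mul_simple_cancel_left, inv_mul_cancel_left, mul_inv_cancel_left] at hw
    rw [← hw]
    simp only [mul_assoc, mul_inv_cancel_left, hcm', inv_mul_cancel_left]

lemma inv_simple_mul_simple (i j : B) : (σ i * σ j)⁻¹ = σ j * σ i := by
  rw [mul_inv_rev, cs.inv_simple, cs.inv_simple]

lemma cond2_iff (i j : B) (n : ℕ) (w : W) :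
    σ j * ((σ i * σ j) ^ n * w * ((σ i * σ j) ^ n)⁻¹) * σ j = σ i
      ↔ (σ i * σ j) ^ (2 * n + 1) = σ j * w⁻¹ := by
  have swap_pow : ∀ m : ℕ, (σ j * σ i) ^ m = ((σ i * σ j) ^ m)⁻¹ := by
    intro m
    rw [← inv_simple_mul_simple, inv_pow]
  have step1 : (σ j * ((σ i * σ j) ^ n * w * ((σ i * σ j) ^ n)⁻¹) * σ j = σ i)
      ↔ ((σ j * σ i) ^ n * (σ j * w * σ j) * ((σ j * σ i) ^ n)⁻¹ = σ i) := by
    have e : (σ j * σ i) ^ n * (σ j * w * σ j) * ((σ j * σ i) ^ n)⁻¹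
        = σ j * ((σ i * σ j) ^ n * w * ((σ i * σ j) ^ n)⁻¹) * σ j := by
      rw [swap_pow, inv_inv]
      have hconj := simple_conj_pow cs i j n
      calc ((σ i * σ j) ^ n)⁻¹ * (σ j * w * σ j) * (σ i * σ j) ^ n
          = (σ j * (σ i * σ j) ^ n * σ j) * (σ j * w * σ j) * (σ j * ((σ i * σ j) ^ n)⁻¹ * σ j) := by
            rw [hconj]
            rw [show σ j * ((σ i * σ j) ^ n)⁻¹ * σ j = (σ j * (σ i * σ j) ^ n * σ j)⁻¹ by
              rw [mul_inv_rev, mul_inv_rev, cs.inv_simple]; group]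
            rw [hconj, inv_inv]
        _ = σ j * ((σ i * σ j) ^ n * w * ((σ i * σ j) ^ n)⁻¹) * σ j := by
            simp only [mul_assoc, cs.simple_mul_simple_cancel_left]
    rw [e]
  rw [step1, cond1_iff cs j i n (σ j * w * σ j)]
  -- now : (σ j * σ i) ^ (2*n) = σ i * (σ j * w * σ j)⁻¹ ↔ (σ i * σ j)^(2n+1) = σ j * w⁻¹
  rw [swap_pow]
  have hinv : (σ j * w * σ j)⁻¹ = σ j * w⁻¹ * σ j := by
    rw [mul_inv_rev, mul_inv_rev, cs.inv_simple, ← mul_assoc]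
  have pcm : ∀ m : ℕ, (σ i * σ j) ^ m * σ j = σ j * ((σ i * σ j) ^ m)⁻¹ := by
    intro m
    have h0 := simple_conj_pow cs i j m
    simpa only [mul_assoc, cs.simple_mul_simple_cancel_left]
      using congrArg (fun z => σ j * z) h0
  have pcm' : ∀ m : ℕ, ((σ i * σ j) ^ m)⁻¹ * σ j = σ j * (σ i * σ j) ^ m := by
    intro m
    have h0 := simple_conj_pow cs i j m
    have h1 := congrArg (fun z => z * σ j) h0
    simp only [cs.simple_mul_simple_cancel_right] at h1
    exact h1.symm
  constructor
  · intro h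
    rw [hinv] at h
    have h2 := congrArg (fun z => σ i * z * σ j) h
    simp only [mul_assoc, cs.simple_mul_simple_cancel_left, cs.simple_mul_simple_self,
      mul_one] at h2
    rw [← h2, pcm' (2*n), ← mul_assoc, ← pow_succ']
  · intro h
    rw [hinv]
    rw [show σ i * (σ j * w⁻¹ * σ j) = σ i * (σ j * w⁻¹) * σ j from (mul_assoc _ _ _).symm]
    rw [← h, pow_succ', mul_assoc, mul_assoc, pcm (2*n)]
    simp only [mul_assoc, cs.simple_mul_simple_cancel_left]
noncomputable def braidCount (i j : B) (n : ℕ) (w : W) : ℕ :=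
  ∑ k ∈ Finset.range (2 * n), if (σ i * σ j) ^ k = σ j * w⁻¹ then 1 else 0

lemma braidCount_succ (i j : B) (n : ℕ) (w : W) :
    braidCount cs i j (n + 1) w = braidCount cs i j n w
      + ((if (σ i * σ j) ^ (2 * n) = σ j * w⁻¹ then 1 else 0)
        + (if (σ i * σ j) ^ (2 * n + 1) = σ j * w⁻¹ then 1 else 0)) := by
  unfold braidCount
  rw [show 2 * (n + 1) = (2 * n + 1) + 1 by ring, Finset.sum_range_succ, Finset.sum_range_succ]
  ring

lemma eta_pow_apply (i j : B) (n : ℕ) (w : W) (ε : ℤˣ) :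
    ((eta cs i * eta cs j) ^ n) (w, ε)
      = ((σ i * σ j) ^ n * w * ((σ i * σ j) ^ n)⁻¹,
          ε * (-1) ^ braidCount cs i j n w) := by
  induction n with
  | zero => simp [braidCount]
  | succ n ih =>
    have key : ((eta cs i * eta cs j) ^ (n + 1)) (w, ε)
        = (eta cs i) ((eta cs j) (((eta cs i * eta cs j) ^ n) (w, ε))) := by
      rw [pow_succ']
      rfl
    rw [key, ih, braidCount_succ, eta_apply, eta_apply]
    dsimp only
    have hfst : σ i * (σ j * ((σ i * σ j) ^ n * w * ((σ i * σ j) ^ n)⁻¹) * σ j) * σ i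
        = (σ i * σ j) ^ (n + 1) * w * ((σ i * σ j) ^ (n + 1))⁻¹ := by
      rw [pow_succ', mul_inv_rev, inv_simple_mul_simple cs i j]
      group
    by_cases hA : (σ i * σ j) ^ (2 * n) = σ j * w⁻¹ <;>
      by_cases hB : (σ i * σ j) ^ (2 * n + 1) = σ j * w⁻¹
    · rw [if_pos ((cond1_iff cs i j n w).mpr hA)]
      rw [if_pos ((cond2_iff cs i j n w).mpr hB)]
      refine Prod.ext hfst ?_
      rw [if_pos hA, if_pos hB]
      simp [pow_add, mul_comm, mul_left_comm, mul_assoc]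
    · rw [if_pos ((cond1_iff cs i j n w).mpr hA)]
      rw [if_neg (fun hc => hB ((cond2_iff cs i j n w).mp hc))]
      refine Prod.ext hfst ?_
      rw [if_pos hA, if_neg (fun hc : _ = _ => hB hc)]
      simp [pow_add, mul_comm, mul_left_comm, mul_assoc]
    · rw [if_neg (fun hc : _ = _ => hA ((cond1_iff cs i j n w).mp hc))]
      rw [if_pos ((cond2_iff cs i j n w).mpr hB)]
      refine Prod.ext hfst ?_
      rw [if_neg (fun hc : _ = _ => hA hc), if_pos hB]
      simp [pow_add, mul_comm, mul_left_comm, mul_assoc]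
    · rw [if_neg (fun hc : _ = _ => hA ((cond1_iff cs i j n w).mp hc))]
      rw [if_neg (fun hc : _ = _ => hB ((cond2_iff cs i j n w).mp hc))]
      refine Prod.ext hfst ?_
      rw [if_neg (fun hc : _ = _ => hA hc), if_neg (fun hc : _ = _ => hB hc)]
      simp [pow_add, mul_comm, mul_left_comm, mul_assoc]

lemma braidCount_even (i j : B) (w : W) : ∃ a, braidCount cs i j (M i j) w = 2 * a := by
  refine ⟨∑ k ∈ Finset.range (M i j), if (σ i * σ j) ^ k = σ j * w⁻¹ then 1 else 0, ?_⟩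
  unfold braidCount
  rw [two_mul (M i j), Finset.sum_range_add, two_mul]
  congr 1
  refine Finset.sum_congr rfl fun k _ => ?_
  rw [pow_add, cs.simple_mul_simple_pow i j, one_mul]

lemma eta_liftable : CoxeterMatrix.IsLiftable M (fun i => eta cs i) := by
  intro i j
  refine Equiv.ext fun p => ?_
  obtain ⟨w, ε⟩ := p
  show ((eta cs i * eta cs j) ^ M i j) (w, ε) = (w, ε)
  rw [eta_pow_apply]
  obtain ⟨a, ha⟩ := braidCount_even cs i j w
  rw [ha, cs.simple_mul_simple_pow i j, pow_mul]
  simp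

/-- The permutation representation of `W` on `W × ℤˣ`. -/
noncomputable def Phi : W →* Equiv.Perm (W × ℤˣ) :=
  cs.lift ⟨fun i => eta cs i, eta_liftable cs⟩

lemma Phi_simple (i : B) : Phi cs (σ i) = eta cs i :=
  cs.lift_apply_simple (eta_liftable cs) i

lemma Phi_wordProd (ω : List B) (w : W) (ε : ℤˣ) :
    Phi cs (cs.wordProd ω) (w, ε)
      = (cs.wordProd ω * w * (cs.wordProd ω)⁻¹,
          ε * (-1) ^ (cs.rightInvSeq ω).count w) := by
  induction ω generalizing w ε with
  | nil => simp [CoxeterSystem.wordProd_nil, CoxeterSystem.rightInvSeq]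
  | cons i ω ih =>
    rw [cs.wordProd_cons, map_mul]
    have : (Phi cs (σ i) * Phi cs (cs.wordProd ω)) (w, ε)
        = Phi cs (σ i) (Phi cs (cs.wordProd ω) (w, ε)) := rfl
    rw [this, ih, Phi_simple, eta_apply]
    dsimp only
    have hris : cs.rightInvSeq (i :: ω)
        = (cs.wordProd ω)⁻¹ * σ i * cs.wordProd ω :: cs.rightInvSeq ω := rfl
    rw [hris, List.count_cons]
    simp only [beq_iff_eq]
    have hcond : (cs.wordProd ω * w * (cs.wordProd ω)⁻¹ = σ i)
        ↔ ((cs.wordProd ω)⁻¹ * σ i * cs.wordProd ω = w) := by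
      constructor
      · intro h
        rw [← h]
        group
      · intro h
        rw [← h]
        group
    have hfst : σ i * (cs.wordProd ω * w * (cs.wordProd ω)⁻¹) * σ i
        = cs.wordProd (i :: ω) * w * (cs.wordProd (i :: ω))⁻¹ := by
      rw [cs.wordProd_cons, mul_inv_rev, cs.inv_simple]
      group
    by_cases h : cs.wordProd ω * w * (cs.wordProd ω)⁻¹ = σ i
    · rw [if_pos h]
      refine Prod.ext hfst ?_
      rw [if_pos (hcond.mp h), pow_add, pow_one]
      simp [mul_comm, mul_left_comm, mul_assoc]
    · rw [if_neg h]
      refine Prod.ext hfst ?_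
      rw [if_neg (fun hc : _ = _ => h (hcond.mpr hc)), add_zero]

/-- The sign of the pair `(t, 1)` under `Phi z`. -/
noncomputable def phiSgn (z w : W) : ℤˣ := (Phi cs z (w, 1)).2

lemma phiSgn_count (ω : List B) (w : W) :
    phiSgn cs (cs.wordProd ω) w = (-1) ^ (cs.rightInvSeq ω).count w := by
  unfold phiSgn
  rw [Phi_wordProd, one_mul]

lemma Phi_apply (z w : W) (ε : ℤˣ) :
    Phi cs z (w, ε) = (z * w * z⁻¹, ε * phiSgn cs z w) := by
  obtain ⟨ω, rfl⟩ := cs.wordProd_surjective z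
  rw [Phi_wordProd, phiSgn_count]

lemma phiSgn_refl {t : W} (ht : cs.IsReflection t) : phiSgn cs t t = -1 := by
  obtain ⟨v, j, hts⟩ := ht
  have hvt : v⁻¹ * t * (v⁻¹)⁻¹ = σ j := by rw [hts]; group
  have h1 : Phi cs v⁻¹ (t, 1) = (σ j, phiSgn cs v⁻¹ t) := by
    rw [Phi_apply, hvt, one_mul]
  have hδ : phiSgn cs v⁻¹ t * phiSgn cs v (σ j) = 1 := by
    have h0 : Phi cs v (Phi cs v⁻¹ (t, 1)) = (t, 1) := by
      rw [← Equiv.Perm.mul_apply, ← map_mul, mul_inv_cancel, map_one, Equiv.Perm.one_apply]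
    rw [h1, Phi_apply] at h0
    have h2 := (Prod.ext_iff.mp h0).2
    dsimp only at h2
    exact h2
  have e1 : Phi cs t = Phi cs v * (Phi cs (σ j) * Phi cs v⁻¹) := by
    rw [← map_mul, ← map_mul, hts]
    congr 1
    group
  unfold phiSgn
  rw [e1]
  show (Phi cs v ((Phi cs (σ j)) ((Phi cs v⁻¹) (t, 1)))).2 = -1
  rw [h1, Phi_simple, eta_apply]
  dsimp only
  rw [if_pos rfl]
  have h3 : σ j * σ j * σ j = σ j := by
    rw [cs.simple_mul_simple_self, one_mul]
  rw [h3, Phi_apply]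
  dsimp only
  rw [neg_mul, hδ]

lemma phiSgn_mul_refl (w : W) {t : W} (ht : cs.IsReflection t) :
    phiSgn cs (w * t) t = - phiSgn cs w t := by
  unfold phiSgn
  rw [map_mul]
  show (Phi cs w ((Phi cs t) (t, 1))).2 = _
  have h1 : Phi cs t (t, 1) = (t, -1) := by
    rw [Phi_apply, phiSgn_refl cs ht, one_mul]
    congr 1
    group
  rw [h1, Phi_apply]
  dsimp only
  rw [neg_one_mul]
  rfl

lemma length_lt_of_phiSgn {w t : W} (ht : cs.IsReflection t)
    (h : phiSgn cs w t = -1) : cs.length (w * t) < cs.length w := by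
  obtain ⟨ω, hred, rfl⟩ := cs.exists_reduced_word' w
  rw [phiSgn_count] at h
  have hmem : t ∈ cs.rightInvSeq ω := by
    by_contra hc
    rw [List.count_eq_zero_of_not_mem hc, pow_zero] at h
    exact (by decide : (1 : ℤˣ) ≠ -1) h
  exact (cs.isRightInversion_of_mem_rightInvSeq hred hmem).2

lemma phiSgn_of_length_lt {w t : W} (ht : cs.IsReflection t)
    (h : cs.length (w * t) < cs.length w) : phiSgn cs w t = -1 := by
  rcases Int.units_eq_one_or (phiSgn cs w t) with h1 | h1
  · exfalso
    have h2 : phiSgn cs (w * t) t = -1 := by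
      rw [phiSgn_mul_refl cs w ht, h1]
    have h3 := length_lt_of_phiSgn cs ht h2
    rw [mul_assoc, ht.mul_self, mul_one] at h3
    omega
  · exact h1

lemma exchange_simple {ω : List B} (hred : cs.IsReduced ω) (i : B)
    (h : cs.length (cs.wordProd ω * σ i) < cs.length (cs.wordProd ω)) :
    ∃ k < ω.length, cs.wordProd ω * σ i = cs.wordProd (ω.eraseIdx k) := by
  have hsgn := phiSgn_of_length_lt cs (cs.isReflection_simple i) h
  rw [phiSgn_count] at hsgn
  have hmem : σ i ∈ cs.rightInvSeq ω := by
    by_contra hc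
    rw [List.count_eq_zero_of_not_mem hc, pow_zero] at hsgn
    exact (by decide : (1 : ℤˣ) ≠ -1) hsgn
  obtain ⟨k, hk, hget⟩ := List.mem_iff_getElem.mp hmem
  rw [cs.length_rightInvSeq] at hk
  refine ⟨k, hk, ?_⟩
  have hgetD : (cs.rightInvSeq ω).getD k 1 = σ i := by
    rw [List.getD_eq_getElem _ _ (by rwa [cs.length_rightInvSeq])]
    exact hget
  rw [← hgetD]
  exact cs.wordProd_mul_getD_rightInvSeq ω k

lemma exists_word_st (s t : B) (g : W)
    (hg : g ∈ Subgroup.closure {cs.simple s, cs.simple t}) :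
    ∃ ω : List B, (∀ b ∈ ω, b = s ∨ b = t) ∧ cs.wordProd ω = g := by
  induction hg using Subgroup.closure_induction with
  | mem x hx =>
    rcases hx with hx | hx
    · exact ⟨[s], by simp, by simpa using hx.symm⟩
    · exact ⟨[t], by simp, by simpa using hx.symm⟩
  | one => exact ⟨[], by simp, by simp⟩
  | mul x y hx hy ihx ihy =>
    obtain ⟨ω₁, h1, e1⟩ := ihx
    obtain ⟨ω₂, h2, e2⟩ := ihy
    refine ⟨ω₁ ++ ω₂, ?_, by rw [cs.wordProd_append, e1, e2]⟩
    intro b hb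
    rcases List.mem_append.mp hb with hb | hb
    · exact h1 b hb
    · exact h2 b hb
  | inv x hx ih =>
    obtain ⟨ω₁, h1, e1⟩ := ih
    refine ⟨ω₁.reverse, ?_, by rw [cs.wordProd_reverse, e1]⟩
    intro b hb
    exact h1 b (List.mem_reverse.mp hb)

lemma reduce_word_st (s t : B) :
    ∀ ω : List B, (∀ b ∈ ω, b = s ∨ b = t) →
      ∃ ω' : List B, (∀ b ∈ ω', b = s ∨ b = t) ∧ cs.IsReduced ω' ∧
        cs.wordProd ω' = cs.wordProd ω := by
  intro ω
  induction ω using List.reverseRecOn with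
  | nil =>
    intro _
    exact ⟨[], by simp, by simp [CoxeterSystem.IsReduced], rfl⟩
  | append_singleton ω i ih =>
    intro hmem
    obtain ⟨ω₁, h1, hred1, e1⟩ := ih (fun b hb => hmem b (List.mem_append_left _ hb))
    have hi : i = s ∨ i = t := hmem i (by simp)
    have hprod : cs.wordProd (ω ++ [i]) = cs.wordProd ω₁ * σ i := by
      rw [cs.wordProd_append, cs.wordProd_singleton, e1]
    rcases cs.length_mul_simple (cs.wordProd ω₁) i with hup | hdown
    · refine ⟨ω₁ ++ [i], ?_, ?_, ?_⟩
      · intro b hb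
        rcases List.mem_append.mp hb with hb | hb
        · exact h1 b hb
        · simp at hb
          rw [hb]; exact hi
      · show cs.length (cs.wordProd (ω₁ ++ [i])) = (ω₁ ++ [i]).length
        rw [cs.wordProd_append, cs.wordProd_singleton, hup, List.length_append,
          List.length_singleton]
        have hr : cs.length (cs.wordProd ω₁) = ω₁.length := hred1
        omega
      · rw [cs.wordProd_append, cs.wordProd_singleton, hprod]
    · have hlt : cs.length (cs.wordProd ω₁ * σ i) < cs.length (cs.wordProd ω₁) := by omega
      obtain ⟨k, hk, heq⟩ := exchange_simple cs hred1 i hlt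
      refine ⟨ω₁.eraseIdx k, ?_, ?_, ?_⟩
      · intro b hb
        exact h1 b ((ω₁.eraseIdx_sublist k).subset hb)
      · show cs.length (cs.wordProd (ω₁.eraseIdx k)) = (ω₁.eraseIdx k).length
        rw [← heq]
        have h2 := List.length_eraseIdx_add_one hk
        have hr : cs.length (cs.wordProd ω₁) = ω₁.length := hred1
        omega
      · rw [← heq, hprod]

lemma exists_st_descent (s t : B) (g : W)
    (hg : g ∈ Subgroup.closure {cs.simple s, cs.simple t}) (hne : g ≠ 1) :
    ∃ i : B, (i = s ∨ i = t) ∧ cs.length (σ i * g) < cs.length g := by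
  obtain ⟨ω, hmem, e⟩ := exists_word_st cs s t g hg
  obtain ⟨ω', hmem', hred', e'⟩ := reduce_word_st cs s t ω hmem
  rw [e] at e'
  cases ω' with
  | nil => exact absurd (by simpa using e'.symm) hne
  | cons i ωt =>
    refine ⟨i, hmem' i (by simp), ?_⟩
    have hsg : σ i * g = cs.wordProd ωt := by
      rw [← e', cs.wordProd_cons, cs.simple_mul_simple_cancel_left]
    have hlen : cs.length g = ωt.length + 1 := by
      rw [← e']
      have := hred'
      simpa [CoxeterSystem.IsReduced] using this
    rw [hsg]
    have := cs.length_wordProd_le ωt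
    omega

end Eta

section Bruhat

variable (cs : CoxeterSystem M W)

local prefix:100 "σ" => cs.simple

lemma length_simple_mul_ge (w : W) (i : B) :
    cs.length w ≤ cs.length (σ i * w) + 1 := by
  rcases cs.length_simple_mul w i with h | h <;> omega

lemma bruhatLE_of_simple_mul {w : W} {i : B}
    (h : cs.length (σ i * w) < cs.length w) :
    bruhatLE cs (σ i * w) w := by
  apply Relation.ReflTransGen.single
  refine ⟨(σ i * w)⁻¹ * σ i * (σ i * w), ?_, ?_, ?_⟩
  · have := (cs.isReflection_simple i).conj (σ i * w)⁻¹
    simpa using this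
  · rw [show σ i * w * ((σ i * w)⁻¹ * σ i * (σ i * w)) = σ i * (σ i * w) by group,
      cs.simple_mul_simple_cancel_left]
  · exact h

lemma bruhatLE_length_le {u v : W} (h : bruhatLE cs u v) :
    cs.length u ≤ cs.length v := by
  induction h with
  | refl => exact le_refl _
  | tail hs hedge ih =>
    obtain ⟨t, _, _, hlt⟩ := hedge
    omega

lemma minRep_simple_mul {H : Set B} {w : W} {i : B} (hw : w ∈ minRep cs H)
    (h : cs.length (σ i * w) < cs.length w) : σ i * w ∈ minRep cs H := by
  intro j hj
  have h1 : cs.length w < cs.length (w * σ j) := hw j hj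
  have h2 : cs.length (w * σ j) ≤ cs.length (σ i * (w * σ j)) + 1 :=
    length_simple_mul_ge cs (w * σ j) i
  rw [← mul_assoc] at h2
  rcases cs.length_mul_simple (σ i * w) j with h3 | h3 <;> omega

end Bruhat

section MainAux

variable (cs : CoxeterSystem M W)

local prefix:100 "σ" => cs.simple

lemma sub_ne_zero_of_hx {x : Polynomial ℤ} (hx : x = -1 ∨ x = X) :
    (X - 1 - x : Polynomial ℤ) ≠ 0 := by
  rcases hx with rfl | rfl
  · intro h
    apply Polynomial.X_ne_zero (R := ℤ)
    linear_combination h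
  · intro h
    apply (neg_ne_zero.mpr (one_ne_zero (α := Polynomial ℤ)))
    linear_combination h

lemma main_aux (H : Set B) (x : Polynomial ℤ) (hx : x = -1 ∨ x = X)
    (R : W → W → Polynomial ℤ) (hR : IsRFamily cs H x R)
    (s t : B) (u₃ : W)
    (hu₃W : u₃ ∈ minRep cs H) (hu₃L : u₃ ∈ minRepLeft cs {s, t})
    (hsing : ((fun g => g * u₃) '' (stSubgroup cs s t : Set W)) ∩ minRep cs H
        = {u₃}) :
    ∀ n : ℕ, ∀ w₂ w₃ : W, cs.length w₂ = n → w₂ ∈ stSubgroup cs s t →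
      w₃ ∈ minRepLeft cs {s, t} → (w₂ * w₃) ∈ minRep cs H →
      cs.length (w₂ * w₃) = cs.length w₂ + cs.length w₃ →
      R u₃ (w₂ * w₃) = (X - 1 - x) ^ n * R u₃ w₃ := by
  intro n
  induction n using Nat.strong_induction_on with
  | _ n ih =>
  intro w₂ w₃ hlen hw₂c hw₃L hWH hadd
  rcases Nat.eq_zero_or_pos n with hn0 | hnpos
  · subst hn0
    have hone : w₂ = 1 := cs.length_eq_zero_iff.mp hlen
    rw [hone, one_mul, pow_zero, one_mul]
  · obtain ⟨m, rfl⟩ : ∃ m, n = m + 1 := ⟨n - 1, by omega⟩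
    have hne1 : w₂ ≠ 1 := by
      intro hc
      rw [hc, cs.length_one] at hlen
      omega
    obtain ⟨i, hist, hdesc⟩ := exists_st_descent cs s t w₂ hw₂c hne1
    have histS : i ∈ ({s, t} : Set B) := by
      rcases hist with rfl | rfl
      · exact Set.mem_insert _ _
      · exact Set.mem_insert_of_mem _ rfl
    have hlen2 : cs.length (σ i * w₂) = m := by
      rcases cs.length_simple_mul w₂ i with h | h <;> omega
    have hw₂c' : σ i * w₂ ∈ stSubgroup cs s t := by
      refine Subgroup.mul_mem _ ?_ hw₂c
      apply Subgroup.subset_closure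
      rcases hist with rfl | rfl
      · exact Set.mem_insert _ _
      · exact Set.mem_insert_of_mem _ rfl
    have hassoc : σ i * (w₂ * w₃) = (σ i * w₂) * w₃ := (mul_assoc _ _ _).symm
    have hadd' : cs.length ((σ i * w₂) * w₃) = cs.length (σ i * w₂) + cs.length w₃ := by
      have hub := cs.length_mul_le (σ i * w₂) w₃
      have hlb := length_simple_mul_ge cs (w₂ * w₃) i
      rw [hassoc] at hlb
      omega
    have hdescW : cs.length (σ i * (w₂ * w₃)) < cs.length (w₂ * w₃) := by
      rw [hassoc, hadd']
      omega
    have hWH' : (σ i * w₂) * w₃ ∈ minRep cs H := by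
      rw [← hassoc]
      exact minRep_simple_mul cs hWH hdescW
    have hu₃ne : u₃ ≠ w₂ * w₃ := by
      intro hc
      have := hu₃L i histS
      rw [hc] at this
      omega
    have hXne : (X - 1 - x : Polynomial ℤ) ≠ 0 := sub_ne_zero_of_hx hx
    have hIH := ih m (by omega) (σ i * w₂) w₃ hlen2 hw₂c' hw₃L hWH' hadd'
    by_cases hle : bruhatLE cs u₃ (w₂ * w₃)
    · have hrec := (hR.2.2 u₃ (w₂ * w₃) hu₃W hWH ⟨hle, hu₃ne⟩ i hdescW).2.2
      have hc1 : cs.length u₃ < cs.length (σ i * u₃) := hu₃L i histS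
      have hc2 : σ i * u₃ ∉ minRep cs H := by
        intro hc
        have hmem : σ i * u₃ ∈ ((fun g => g * u₃) '' (stSubgroup cs s t : Set W))
            ∩ minRep cs H := by
          refine ⟨⟨σ i, ?_, rfl⟩, hc⟩
          apply Subgroup.subset_closure
          rcases hist with rfl | rfl
          · exact Set.mem_insert _ _
          · exact Set.mem_insert_of_mem _ rfl
        rw [hsing] at hmem
        have : σ i * u₃ = u₃ := hmem
        rw [this] at hc1
        omega
      rw [hrec hc1 hc2, hassoc, hIH, pow_succ]
      ring
    · have h0 : R u₃ (w₂ * w₃) = 0 := hR.1 u₃ _ hu₃W hWH hle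
      have hle' : ¬ bruhatLE cs u₃ ((σ i * w₂) * w₃) := by
        intro hc
        apply hle
        refine Relation.ReflTransGen.trans hc ?_
        have := bruhatLE_of_simple_mul cs hdescW
        rwa [hassoc] at this
      have h0' : R u₃ ((σ i * w₂) * w₃) = 0 := hR.1 u₃ _ hu₃W hWH' hle'
      rw [h0', eq_comm] at hIH
      have hR3 : R u₃ w₃ = 0 := by
        rcases mul_eq_zero.mp hIH with hc | hc
        · exact absurd hc (pow_ne_zero _ hXne)
        · exact hc
      rw [h0, hR3, mul_zero]

end MainAux

/-- Lemma `sesingleton`: with length-additive factorizations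
`w = w₂·w₃`, `u = u₂·u₃` (`w₂,u₂ ∈ W_{{s,t}}`, `w₃,u₃ ∈ ^{{s,t}}W`), `u ≤ w`,
`u, w ∈ W^H`, if `(W_{{s,t}}·u₃) ∩ W^H = {u₃}` then `u = u₃` and
`R^{H,x}_{u,w} = (q-1-x)^{ℓ(w₂)} R^{H,x}_{u₃,w₃}`. -/
theorem R_of_coset_singleton
    {B : Type*} {W : Type*} [Group W] {M : CoxeterMatrix B} (cs : CoxeterSystem M W)
    (H : Set B) (x : Polynomial ℤ) (hx : x = -1 ∨ x = X)
    (R : W → W → Polynomial ℤ) (hR : IsRFamily cs H x R)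
    (s t : B) (w u w₂ w₃ u₂ u₃ : W)
    (hw : w = w₂ * w₃) (hu : u = u₂ * u₃)
    (hwl : cs.length w = cs.length w₂ + cs.length w₃)
    (hul : cs.length u = cs.length u₂ + cs.length u₃)
    (hw₂ : w₂ ∈ stSubgroup cs s t) (hu₂ : u₂ ∈ stSubgroup cs s t)
    (hw₃ : w₃ ∈ minRepLeft cs {s, t}) (hu₃ : u₃ ∈ minRepLeft cs {s, t})
    (hwH : w ∈ minRep cs H) (huH : u ∈ minRep cs H)
    (huw : bruhatLE cs u w)
    (hsing : ((fun g => g * u₃) '' (stSubgroup cs s t : Set W)) ∩ minRep cs H = {u₃}) :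
    u = u₃ ∧ R u w = (X - 1 - x) ^ (cs.length w₂) * R u₃ w₃ := by
  have hu₃W : u₃ ∈ minRep cs H := by
    have h0 : u₃ ∈ ({u₃} : Set W) := rfl
    rw [← hsing] at h0
    exact h0.2
  have hueq : u = u₃ := by
    have hmem : u ∈ ((fun g => g * u₃) '' (stSubgroup cs s t : Set W)) ∩ minRep cs H :=
      ⟨⟨u₂, hu₂, hu.symm⟩, huH⟩
    rw [hsing] at hmem
    exact hmem
  refine ⟨hueq, ?_⟩
  rw [hueq, hw]
  exact main_aux cs H x hx R hR s t u₃ hu₃W hu₃ hsing (cs.length w₂) w₂ w₃ rfl hw₂ hw₃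
    (hw ▸ hwH) (hw ▸ hwl)

end CIKL
end
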